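/- Let M be a matroid on a finite ground set E with rank function r, and let q be a rational with 0 < q < 1. Suppose 𝛄 is a weight function such that: γ_e > -1 for every loop e; γ_e < -q for every coloop e; and -1 - √(1-q) < γ_e < -1 + √(1-q) for every element e that is neither a loop nor a coloop. Then (-1)^{r(E)} · Z̃(M;q,𝛄) > 0. -/

import Mathlib

/-- A matroid on a finite ground set `E`, presented by its rank function. -/
structure RankMatroid (α : Type) [DecidableEq α] where
  /-- the ground set -/
  E : Finset α
  /-- the rank function -/
  r : Finset α → ℕ
  rank_le_card : ∀ A, A ⊆ E → r A ≤ A.card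
  rank_mono : ∀ A B, A ⊆ B → B ⊆ E → r A ≤ r B
  rank_submodular : ∀ A B, A ⊆ E → B ⊆ E → r (A ∪ B) + r (A ∩ B) ≤ r A + r B

/-- The multivariate matroid Tutte polynomial
`Z̃(M;q,𝛄) = Σ_{A⊆E} q^{-r(A)} ∏_{e∈A} γ_e`. -/
noncomputable def Zt {α : Type} [DecidableEq α] (M : RankMatroid α) (q : ℚ) (w : α → ℚ) : ℚ :=
  ∑ A ∈ M.E.powerset, q ^ (-(M.r A : ℤ)) * ∏ e ∈ A, w e

/-- A loop of a matroid: an element of the ground set of rank `0`. -/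
def RankMatroid.IsLoop {α : Type} [DecidableEq α] (M : RankMatroid α) (e : α) : Prop :=
  e ∈ M.E ∧ M.r {e} = 0

/-- A basis of a matroid: an independent subset of the ground set of full rank. -/
def RankMatroid.IsBasis {α : Type} [DecidableEq α] (M : RankMatroid α) (B : Finset α) : Prop :=
  B ⊆ M.E ∧ M.r B = B.card ∧ M.r B = M.r M.E

/-- A coloop of a matroid: an element belonging to every basis. -/
def RankMatroid.IsColoop {α : Type} [DecidableEq α] (M : RankMatroid α) (e : α) : Prop :=
  e ∈ M.E ∧ ∀ B : Finset α, M.IsBasis B → e ∈ B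

namespace TutteAux

variable {α : Type} [DecidableEq α]

lemma r_mono (M : RankMatroid α) {A B : Finset α} (h : A ⊆ B) (hB : B ⊆ M.E) :
    M.r A ≤ M.r B := M.rank_mono A B h hB

lemma r_empty (M : RankMatroid α) : M.r ∅ = 0 :=
  Nat.le_zero.mp (by simpa using M.rank_le_card ∅ (Finset.empty_subset _))

lemma r_singleton_le (M : RankMatroid α) {e : α} (he : e ∈ M.E) : M.r {e} ≤ 1 := by
  simpa using M.rank_le_card {e} (by simpa using he)

lemma r_insert_le (M : RankMatroid α) {e : α} {A : Finset α} (he : e ∈ M.E) (hA : A ⊆ M.E) :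
    M.r (insert e A) ≤ M.r A + M.r {e} := by
  have h := M.rank_submodular A {e} hA (by simpa using he)
  have hu : A ∪ {e} = insert e A := by ext x; simp [or_comm]
  calc M.r (insert e A) ≤ M.r (insert e A) + M.r (A ∩ {e}) := Nat.le_add_right _ _
    _ = M.r (A ∪ {e}) + M.r (A ∩ {e}) := by rw [hu]
    _ ≤ _ := h

lemma loop_insert (M : RankMatroid α) {e : α} (he : e ∈ M.E) (hl : M.r {e} = 0)
    {A : Finset α} (hA : A ⊆ M.E) : M.r (insert e A) = M.r A := by
  have h1 := r_insert_le M he hA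
  have h2 : M.r A ≤ M.r (insert e A) :=
    r_mono M (Finset.subset_insert _ _) (Finset.insert_subset he hA)
  omega

lemma insert_rank_of_coloop (M : RankMatroid α) {e : α} (he : e ∈ M.E)
    (hlt : M.r (M.E.erase e) < M.r M.E) {A : Finset α} (hA : A ⊆ M.E.erase e) :
    M.r (insert e A) = M.r A + 1 := by
  have hAE : A ⊆ M.E := hA.trans (Finset.erase_subset _ _)
  have hup : M.r (insert e A) ≤ M.r A + 1 := by
    have h1 := r_insert_le M he hAE
    have h2 : M.r {e} ≤ 1 := r_singleton_le M he
    omega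
  have hlow : ¬ M.r (insert e A) ≤ M.r A := by
    intro hle
    have hu : (M.E.erase e) ∪ (insert e A) = M.E := by
      ext x
      simp only [Finset.mem_union, Finset.mem_erase, Finset.mem_insert]
      constructor
      · rintro (⟨-, h⟩ | rfl | h)
        · exact h
        · exact he
        · exact hAE h
      · intro hx
        by_cases hxe : x = e
        · exact Or.inr (Or.inl hxe)
        · exact Or.inl ⟨hxe, hx⟩
    have hi : (M.E.erase e) ∩ (insert e A) = A := by
      ext x
      simp only [Finset.mem_inter, Finset.mem_erase, Finset.mem_insert]
      constructor
      · rintro ⟨⟨hxe, -⟩, (rfl | h)⟩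
        · exact absurd rfl hxe
        · exact h
      · intro hx
        exact ⟨Finset.mem_erase.mp (hA hx), Or.inr hx⟩
    have hsm := M.rank_submodular (M.E.erase e) (insert e A)
      (Finset.erase_subset _ _) (Finset.insert_subset he hAE)
    rw [hu, hi] at hsm
    have hm : M.r A ≤ M.r (M.E.erase e) := r_mono M hA (Finset.erase_subset _ _)
    omega
  omega

lemma parallel_insert (M : RankMatroid α) {e f : α} (hf : f ∈ M.E) (hre : M.r {e} = 1)
    (hpar : M.r {e, f} ≤ 1) {A : Finset α} (hA : A ⊆ M.E) (heA : e ∈ A) :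
    M.r (insert f A) = M.r A := by
  have heE : e ∈ M.E := hA heA
  have hpairE : ({e, f} : Finset α) ⊆ M.E := by
    intro x hx
    rcases Finset.mem_insert.mp hx with rfl | hx
    · exact heE
    · simpa using (Finset.mem_singleton.mp hx) ▸ hf
  have hs := M.rank_submodular A {e, f} hA hpairE
  have hu : A ∪ {e, f} = insert f A := by
    ext x
    simp only [Finset.mem_union, Finset.mem_insert, Finset.mem_singleton]
    constructor
    · rintro (h | rfl | rfl)
      · exact Or.inr h
      · exact Or.inr heA
      · exact Or.inl rfl
    · rintro (rfl | h)
      · exact Or.inr (Or.inr rfl)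
      · exact Or.inl h
  have hi : M.r {e} ≤ M.r (A ∩ {e, f}) := by
    apply r_mono M _ ((Finset.inter_subset_left).trans hA)
    intro x hx
    rw [Finset.mem_singleton.mp hx]
    exact Finset.mem_inter.mpr ⟨heA, by simp⟩
  rw [hu] at hs
  have hm : M.r A ≤ M.r (insert f A) :=
    r_mono M (Finset.subset_insert _ _) (Finset.insert_subset hf hA)
  omega

def del (M : RankMatroid α) (e : α) : RankMatroid α where
  E := M.E.erase e
  r := M.r
  rank_le_card A hA := M.rank_le_card A (hA.trans (Finset.erase_subset _ _))
  rank_mono A B h hB := M.rank_mono A B h (hB.trans (Finset.erase_subset _ _))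
  rank_submodular A B hA hB := M.rank_submodular A B (hA.trans (Finset.erase_subset _ _))
    (hB.trans (Finset.erase_subset _ _))

def con (M : RankMatroid α) (e : α) (he : e ∈ M.E) (hre : M.r {e} = 1) : RankMatroid α where
  E := M.E.erase e
  r A := M.r (insert e A) - 1
  rank_le_card A hA := by
    have hAE : A ⊆ M.E := hA.trans (Finset.erase_subset _ _)
    have h1 := r_insert_le M he hAE
    have h2 := M.rank_le_card A hAE
    show M.r (insert e A) - 1 ≤ A.card
    omega
  rank_mono A B h hB := by
    have := r_mono M (Finset.insert_subset_insert e h)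
      (Finset.insert_subset he (hB.trans (Finset.erase_subset _ _)))
    show M.r (insert e A) - 1 ≤ M.r (insert e B) - 1
    omega
  rank_submodular A B hA hB := by
    have hAE : insert e A ⊆ M.E := Finset.insert_subset he (hA.trans (Finset.erase_subset _ _))
    have hBE : insert e B ⊆ M.E := Finset.insert_subset he (hB.trans (Finset.erase_subset _ _))
    have hsm := M.rank_submodular (insert e A) (insert e B) hAE hBE
    have hu : insert e A ∪ insert e B = insert e (A ∪ B) := by
      ext x; simp only [Finset.mem_union, Finset.mem_insert]; tauto
    have hi : insert e A ∩ insert e B = insert e (A ∩ B) := by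
      ext x; simp only [Finset.mem_inter, Finset.mem_insert]; tauto
    rw [hu, hi] at hsm
    have g1 : 1 ≤ M.r (insert e A) := hre ▸ r_mono M (by simp) hAE
    have g2 : 1 ≤ M.r (insert e B) := hre ▸ r_mono M (by simp) hBE
    have g3 : 1 ≤ M.r (insert e (A ∩ B)) := hre ▸ r_mono M (by simp)
      ((Finset.insert_subset_insert e Finset.inter_subset_left).trans hAE)
    have g4 : M.r (insert e A) ≤ M.r (insert e (A ∪ B)) :=
      r_mono M (Finset.insert_subset_insert e Finset.subset_union_left)
        (Finset.insert_subset he (Finset.union_subset (hA.trans (Finset.erase_subset _ _))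
          (hB.trans (Finset.erase_subset _ _))))
    show M.r (insert e (A ∪ B)) - 1 + (M.r (insert e (A ∩ B)) - 1) ≤
      (M.r (insert e A) - 1) + (M.r (insert e B) - 1)
    omega

lemma Zt_erase (M : RankMatroid α) (q : ℚ) (w : α → ℚ) {e : α} (he : e ∈ M.E) :
    Zt M q w = (∑ A ∈ (M.E.erase e).powerset, q ^ (-(M.r A : ℤ)) * ∏ x ∈ A, w x)
      + ∑ A ∈ (M.E.erase e).powerset, q ^ (-(M.r (insert e A) : ℤ)) * (w e * ∏ x ∈ A, w x) := by
  unfold Zt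
  conv_lhs => rw [show M.E = insert e (M.E.erase e) from (Finset.insert_erase he).symm]
  rw [Finset.sum_powerset_insert (Finset.notMem_erase e M.E)]
  congr 1
  refine Finset.sum_congr rfl fun A hA => ?_
  have heA : e ∉ A := fun h => Finset.notMem_erase e M.E (Finset.mem_powerset.mp hA h)
  rw [Finset.prod_insert heA]

lemma Zt_erase2 (M : RankMatroid α) (q : ℚ) (w : α → ℚ) {e f : α}
    (he : e ∈ M.E) (hf : f ∈ M.E) (hef : e ≠ f) :
    Zt M q w = ∑ A ∈ ((M.E.erase f).erase e).powerset,
      ((q ^ (-(M.r A : ℤ)) + q ^ (-(M.r (insert e A) : ℤ)) * w e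
        + q ^ (-(M.r (insert f A) : ℤ)) * w f
        + q ^ (-(M.r (insert f (insert e A)) : ℤ)) * (w e * w f)) * ∏ x ∈ A, w x) := by
  rw [Zt_erase M q w hf]
  have he' : e ∈ M.E.erase f := Finset.mem_erase.mpr ⟨hef, he⟩
  have hsp : M.E.erase f = insert e ((M.E.erase f).erase e) := (Finset.insert_erase he').symm
  conv_lhs => rw [hsp]
  rw [Finset.sum_powerset_insert (Finset.notMem_erase e _),
    Finset.sum_powerset_insert (Finset.notMem_erase e _)]
  have key : ∀ A ∈ ((M.E.erase f).erase e).powerset,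
      ((q ^ (-(M.r A : ℤ)) + q ^ (-(M.r (insert e A) : ℤ)) * w e
        + q ^ (-(M.r (insert f A) : ℤ)) * w f
        + q ^ (-(M.r (insert f (insert e A)) : ℤ)) * (w e * w f)) * ∏ x ∈ A, w x)
      = (q ^ (-(M.r A : ℤ)) * ∏ x ∈ A, w x
          + q ^ (-(M.r (insert e A) : ℤ)) * ∏ x ∈ insert e A, w x)
        + (q ^ (-(M.r (insert f A) : ℤ)) * (w f * ∏ x ∈ A, w x)
          + q ^ (-(M.r (insert f (insert e A)) : ℤ)) * (w f * ∏ x ∈ insert e A, w x)) := by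
    intro A hA
    have heA : e ∉ A := fun h => Finset.notMem_erase e _ (Finset.mem_powerset.mp hA h)
    rw [Finset.prod_insert heA]
    ring
  rw [Finset.sum_congr rfl key]
  rw [Finset.sum_add_distrib, Finset.sum_add_distrib, Finset.sum_add_distrib]

lemma Zt_loop (M : RankMatroid α) (q : ℚ) (w : α → ℚ) {e : α} (he : e ∈ M.E)
    (hl : M.r {e} = 0) : Zt M q w = (1 + w e) * Zt (del M e) q w := by
  have hdel : Zt (del M e) q w
      = ∑ A ∈ (M.E.erase e).powerset, q ^ (-(M.r A : ℤ)) * ∏ x ∈ A, w x := rfl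
  rw [Zt_erase M q w he, hdel, Finset.mul_sum, ← Finset.sum_add_distrib]
  refine Finset.sum_congr rfl fun A hA => ?_
  have hA' : A ⊆ M.E := (Finset.mem_powerset.mp hA).trans (Finset.erase_subset _ _)
  rw [loop_insert M he hl hA']
  ring

lemma Zt_coloop (M : RankMatroid α) (q : ℚ) (hq : q ≠ 0) (w : α → ℚ) {e : α} (he : e ∈ M.E)
    (hlt : M.r (M.E.erase e) < M.r M.E) :
    q * Zt M q w = (q + w e) * Zt (del M e) q w := by
  have hdel : Zt (del M e) q w
      = ∑ A ∈ (M.E.erase e).powerset, q ^ (-(M.r A : ℤ)) * ∏ x ∈ A, w x := rfl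
  rw [Zt_erase M q w he, hdel, mul_add, Finset.mul_sum, Finset.mul_sum, Finset.mul_sum,
    ← Finset.sum_add_distrib]
  refine Finset.sum_congr rfl fun A hA => ?_
  have hAe : A ⊆ M.E.erase e := Finset.mem_powerset.mp hA
  rw [insert_rank_of_coloop M he hlt hAe]
  have hz : q ^ (-((M.r A + 1 : ℕ) : ℤ)) = q ^ (-(M.r A : ℤ)) * q⁻¹ := by
    have h1 : (-((M.r A + 1 : ℕ) : ℤ)) = -(M.r A : ℤ) + (-1) := by push_cast; ring
    rw [h1, zpow_add₀ hq, zpow_neg_one]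
  rw [hz]
  field_simp

lemma Zt_del_con (M : RankMatroid α) (q : ℚ) (hq : q ≠ 0) (w : α → ℚ) {e : α}
    (he : e ∈ M.E) (hre : M.r {e} = 1) :
    q * Zt M q w = q * Zt (del M e) q w + w e * Zt (con M e he hre) q w := by
  have hdel : Zt (del M e) q w
      = ∑ A ∈ (M.E.erase e).powerset, q ^ (-(M.r A : ℤ)) * ∏ x ∈ A, w x := rfl
  have hcon : Zt (con M e he hre) q w
      = ∑ A ∈ (M.E.erase e).powerset,
          q ^ (-((M.r (insert e A) - 1 : ℕ) : ℤ)) * ∏ x ∈ A, w x := rfl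
  rw [Zt_erase M q w he, hdel, hcon, mul_add, Finset.mul_sum, Finset.mul_sum, Finset.mul_sum]
  congr 1
  refine Finset.sum_congr rfl fun A hA => ?_
  have hAe : A ⊆ M.E.erase e := Finset.mem_powerset.mp hA
  have h1 : 1 ≤ M.r (insert e A) := hre ▸ r_mono M (by simp)
    (Finset.insert_subset he (hAe.trans (Finset.erase_subset _ _)))
  have hz : q ^ (-((M.r (insert e A) - 1 : ℕ) : ℤ)) = q ^ (-(M.r (insert e A) : ℤ)) * q := by
    have h2 : (-((M.r (insert e A) - 1 : ℕ) : ℤ)) = -(M.r (insert e A) : ℤ) + 1 := by omega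
    rw [h2, zpow_add₀ hq, zpow_one]
  rw [hz]
  ring


lemma Zt_parallel (M : RankMatroid α) (q : ℚ) (w : α → ℚ) {e f : α}
    (he : e ∈ M.E) (hf : f ∈ M.E) (hef : e ≠ f)
    (hre : M.r {e} = 1) (hrf : M.r {f} = 1) (hpar : M.r {e, f} ≤ 1) :
    Zt M q w = Zt (del M f) q (Function.update w e (w e + w f + w e * w f)) := by
  set w' := Function.update w e (w e + w f + w e * w f) with hw'
  have he' : e ∈ (del M f).E := Finset.mem_erase.mpr ⟨hef, he⟩
  rw [Zt_erase2 M q w he hf hef, Zt_erase (del M f) q w' he']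
  have hpar' : M.r {f, e} ≤ 1 := by rwa [Finset.pair_comm]
  rw [← Finset.sum_add_distrib]
  refine Finset.sum_congr rfl fun A hA => ?_
  have hAe : A ⊆ (M.E.erase f).erase e := Finset.mem_powerset.mp hA
  have heA : e ∉ A := fun h => Finset.notMem_erase e _ (hAe h)
  have hAE : A ⊆ M.E := hAe.trans ((Finset.erase_subset _ _).trans (Finset.erase_subset _ _))
  have hiA : insert e A ⊆ M.E := Finset.insert_subset he hAE
  have hfA : insert f A ⊆ M.E := Finset.insert_subset hf hAE
  have r1 : M.r (insert f (insert e A)) = M.r (insert e A) :=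
    parallel_insert M hf hre hpar hiA (Finset.mem_insert_self e A)
  have r2 : M.r (insert f A) = M.r (insert e A) := by
    have h3 : M.r (insert e (insert f A)) = M.r (insert f A) :=
      parallel_insert M he hrf hpar' hfA (Finset.mem_insert_self f A)
    have h4 : insert e (insert f A) = insert f (insert e A) := Finset.insert_comm e f A
    rw [← h3, h4, r1]
  have hprod : ∏ x ∈ A, w' x = ∏ x ∈ A, w x :=
    Finset.prod_congr rfl fun x hx =>
      Function.update_of_ne (fun h : x = e => heA (h ▸ hx)) _ _
  have hwe : w' e = w e + w f + w e * w f := Function.update_self _ _ _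
  show _ = q ^ (-((del M f).r A : ℤ)) * ∏ x ∈ A, w' x
    + q ^ (-((del M f).r (insert e A) : ℤ)) * (w' e * ∏ x ∈ A, w' x)
  have hdr : (del M f).r = M.r := rfl
  rw [hdr, hprod, hwe, r1, r2]
  ring

lemma Zt_series (M : RankMatroid α) (q : ℚ) (hq : q ≠ 0) (w : α → ℚ) {e f : α}
    (he : e ∈ M.E) (hf : f ∈ M.E) (hef : e ≠ f)
    (hre : M.r {e} = 1) (hrf : M.r {f} = 1) (hD : q + w e + w f ≠ 0)
    (hranks : ∀ A ∈ ((M.E.erase f).erase e).powerset,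
      M.r (insert e A) = M.r A + 1 ∧ M.r (insert f A) = M.r A + 1) :
    q * Zt M q w = (q + w e + w f) *
      Zt (con M f hf hrf) q (Function.update w e (w e * w f / (q + w e + w f))) := by
  set γ := w e * w f / (q + w e + w f) with hγ
  set w' := Function.update w e γ with hw'
  have he' : e ∈ (con M f hf hrf).E := Finset.mem_erase.mpr ⟨hef, he⟩
  rw [Zt_erase2 M q w he hf hef, Zt_erase (con M f hf hrf) q w' he']
  rw [← Finset.sum_add_distrib, Finset.mul_sum, Finset.mul_sum]
  refine Finset.sum_congr rfl fun A hA => ?_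
  have hAe : A ⊆ (M.E.erase f).erase e := Finset.mem_powerset.mp hA
  have heA : e ∉ A := fun h => Finset.notMem_erase e _ (hAe h)
  have hAE : A ⊆ M.E := hAe.trans ((Finset.erase_subset _ _).trans (Finset.erase_subset _ _))
  obtain ⟨hrkA_e, hrkA_f⟩ := hranks A hA
  have hfeA : insert f (insert e A) ⊆ M.E :=
    Finset.insert_subset hf (Finset.insert_subset he hAE)
  have hρ : 1 ≤ M.r (insert f (insert e A)) := hrf ▸ r_mono M (by simp) hfeA
  have hprod : ∏ x ∈ A, w' x = ∏ x ∈ A, w x :=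
    Finset.prod_congr rfl fun x hx =>
      Function.update_of_ne (fun h : x = e => heA (h ▸ hx)) _ _
  have hwe : w' e = γ := Function.update_self _ _ _
  show q * ((q ^ (-(M.r A : ℤ)) + q ^ (-(M.r (insert e A) : ℤ)) * w e
        + q ^ (-(M.r (insert f A) : ℤ)) * w f
        + q ^ (-(M.r (insert f (insert e A)) : ℤ)) * (w e * w f)) * ∏ x ∈ A, w x)
      = (q + w e + w f) * (q ^ (-((M.r (insert f A) - 1 : ℕ) : ℤ)) * ∏ x ∈ A, w' x
        + q ^ (-((M.r (insert f (insert e A)) - 1 : ℕ) : ℤ)) * (w' e * ∏ x ∈ A, w' x))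
  rw [hprod, hwe, hrkA_e, hrkA_f, Nat.add_sub_cancel]
  have hz1 : q ^ (-((M.r A + 1 : ℕ) : ℤ)) = q ^ (-(M.r A : ℤ)) * q⁻¹ := by
    have h1 : (-((M.r A + 1 : ℕ) : ℤ)) = -(M.r A : ℤ) + (-1) := by push_cast; ring
    rw [h1, zpow_add₀ hq, zpow_neg_one]
  have hz2 : q ^ (-((M.r (insert f (insert e A)) - 1 : ℕ) : ℤ))
      = q ^ (-(M.r (insert f (insert e A)) : ℤ)) * q := by
    have h2 : (-((M.r (insert f (insert e A)) - 1 : ℕ) : ℤ))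
        = -(M.r (insert f (insert e A)) : ℤ) + 1 := by omega
    rw [h2, zpow_add₀ hq, zpow_one]
  rw [hz1, hz2, hγ]
  generalize q ^ (-(M.r A : ℤ)) = u
  generalize q ^ (-(M.r (insert f (insert e A)) : ℤ)) = v
  generalize (∏ x ∈ A, w x) = P
  field_simp

lemma indep_of_forall_lt (M : RankMatroid α) :
    ∀ (n : ℕ) (A : Finset α), A.card ≤ n → A ⊆ M.E →
      (∀ x ∈ A, M.r (A.erase x) < M.r A) → M.r A = A.card := by
  intro n
  induction n with
  | zero =>
    intro A hc _ _
    have hA : A = ∅ := Finset.card_eq_zero.mp (Nat.le_zero.mp hc)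
    simp [hA, r_empty]
  | succ n ih =>
    intro A hc hAE hall
    rcases A.eq_empty_or_nonempty with rfl | ⟨x, hx⟩
    · simp [r_empty]
    · have hBsub : A.erase x ⊆ A := Finset.erase_subset _ _
      have key : ∀ y ∈ A.erase x, M.r ((A.erase x).erase y) < M.r (A.erase x) := by
        intro y hy
        by_contra hcon
        push_neg at hcon
        obtain ⟨hyx, hyA⟩ := Finset.mem_erase.mp hy
        have hEq : M.r ((A.erase x).erase y) = M.r (A.erase x) :=
          le_antisymm (r_mono M (Finset.erase_subset _ _) (hBsub.trans hAE)) hcon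
        have hu : (A.erase x) ∪ (A.erase y) = A := by
          ext z
          simp only [Finset.mem_union, Finset.mem_erase]
          constructor
          · rintro (⟨-, h⟩ | ⟨-, h⟩) <;> exact h
          · intro hz
            by_cases hzx : z = x
            · exact Or.inr ⟨by rw [hzx]; exact fun h => hyx h.symm, hz⟩
            · exact Or.inl ⟨hzx, hz⟩
        have hi : (A.erase x) ∩ (A.erase y) = (A.erase x).erase y := by
          ext z
          simp only [Finset.mem_inter, Finset.mem_erase]
          tauto
        have hsm := M.rank_submodular (A.erase x) (A.erase y)
          (hBsub.trans hAE) ((Finset.erase_subset _ _).trans hAE)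
        rw [hu, hi, hEq] at hsm
        have h2 := hall y hyA
        omega
      have hBcard : (A.erase x).card = A.card - 1 := Finset.card_erase_of_mem hx
      have h5 : 1 ≤ A.card := Finset.card_pos.mpr ⟨x, hx⟩
      have hB := ih (A.erase x) (by omega) (hBsub.trans hAE) key
      have h3 := hall x hx
      have h4 := M.rank_le_card A hAE
      omega

lemma exists_indep (M : RankMatroid α) :
    ∀ (n : ℕ) (A : Finset α), A.card ≤ n → A ⊆ M.E →
      ∃ I, I ⊆ A ∧ M.r I = I.card ∧ M.r I = M.r A := by
  intro n
  induction n with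
  | zero =>
    intro A hc _
    have hA : A = ∅ := Finset.card_eq_zero.mp (Nat.le_zero.mp hc)
    exact ⟨A, subset_rfl, by simp [hA, r_empty], rfl⟩
  | succ n ih =>
    intro A hc hAE
    by_cases hall : ∀ x ∈ A, M.r (A.erase x) < M.r A
    · exact ⟨A, subset_rfl, indep_of_forall_lt M (n+1) A hc hAE hall, rfl⟩
    · push_neg at hall
      obtain ⟨x, hx, hge⟩ := hall
      have hEq : M.r (A.erase x) = M.r A :=
        le_antisymm (r_mono M (Finset.erase_subset _ _) hAE) hge
      have h5 : 1 ≤ A.card := Finset.card_pos.mpr ⟨x, hx⟩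
      have hBcard : (A.erase x).card = A.card - 1 := Finset.card_erase_of_mem hx
      obtain ⟨I, hIsub, h1, h2⟩ := ih (A.erase x) (by omega)
        ((Finset.erase_subset _ _).trans hAE)
      exact ⟨I, hIsub.trans (Finset.erase_subset _ _), h1, h2.trans hEq⟩

lemma coloop_iff (M : RankMatroid α) {e : α} (he : e ∈ M.E) :
    M.IsColoop e ↔ M.r (M.E.erase e) < M.r M.E := by
  constructor
  · intro hcl
    by_contra hcon
    push_neg at hcon
    have hEq : M.r (M.E.erase e) = M.r M.E :=
      le_antisymm (r_mono M (Finset.erase_subset _ _) subset_rfl) hcon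
    obtain ⟨I, hIsub, h1, h2⟩ := exists_indep M (M.E.erase e).card (M.E.erase e) le_rfl
      (Finset.erase_subset _ _)
    have hbasis : M.IsBasis I :=
      ⟨hIsub.trans (Finset.erase_subset _ _), h1, h2.trans hEq⟩
    exact Finset.notMem_erase e M.E (hIsub (hcl.2 I hbasis))
  · intro hlt
    refine ⟨he, fun B hB => ?_⟩
    by_contra heB
    have hsub : B ⊆ M.E.erase e := Finset.subset_erase.mpr ⟨hB.1, heB⟩
    have h1 : M.r B ≤ M.r (M.E.erase e) := r_mono M hsub (Finset.erase_subset _ _)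
    rw [hB.2.2] at h1
    omega


-- real arithmetic helpers
lemma pos_of_mul_pos' {a b : ℚ} (ha : 0 < a) (h : 0 < a * b) : 0 < b := by
  by_contra hb
  push_neg at hb
  nlinarith

section Reals
variable {s a b qr : ℝ}

lemma par_bounds (hs0 : 0 < s) (hs1 : s < 1) (hq : qr = 1 - s^2)
    (ha1 : -s < a) (ha2 : a < s) (hb1 : -s < b) (hb2 : b < s) :
    a * b - 1 < -qr ∧ -1 - s < a * b - 1 ∧ a * b - 1 < -1 + s := by
  have p1 : 0 < (s - a) * (s + b) := mul_pos (by linarith) (by linarith)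
  have p2 : 0 < (s - b) * (s + a) := mul_pos (by linarith) (by linarith)
  have p3 : 0 < (s + a) * (s + b) := mul_pos (by linarith) (by linarith)
  have p4 : 0 < (s - a) * (s - b) := mul_pos (by linarith) (by linarith)
  refine ⟨by nlinarith, by nlinarith, by nlinarith⟩

lemma ser_bounds (hs0 : 0 < s) (hs1 : s < 1) (hq : qr = 1 - s^2)
    (ha1 : -s < a) (ha2 : a < s) (hb1 : -s < b) (hb2 : b < s) :
    qr + (a - 1) + (b - 1) < 0 ∧
    (-1 - s < (a - 1) * (b - 1) / (qr + (a - 1) + (b - 1)) ∧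
      (a - 1) * (b - 1) / (qr + (a - 1) + (b - 1)) < -1 + s) := by
  subst hq
  have hP3 : 0 < s * ((1 - s) * (1 - s)) :=
    mul_pos hs0 (mul_pos (by linarith) (by linarith))
  have hD : 1 - s^2 + (a - 1) + (b - 1) < 0 := by nlinarith
  have hDne : 1 - s^2 + (a - 1) + (b - 1) ≠ 0 := ne_of_lt hD
  have key1 : s * (1 - s^2 + (a - 1) + (b - 1)) < a * b - s^2 := by
    have p4 : 0 < (s - a) * (s - b) := mul_pos (by linarith) (by linarith)
    nlinarith
  have key2 : a * b - s^2 < -s * (1 - s^2 + (a - 1) + (b - 1)) := by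
    have p1 : 0 < (s - a) * (s + b) := mul_pos (by linarith) (by linarith)
    have p2 : 0 < (s - b) * (s + a) := mul_pos (by linarith) (by linarith)
    have p4 : 0 < s * (2*s - a - b) := mul_pos hs0 (by linarith)
    nlinarith
  have h1 : (a - 1) * (b - 1) / (1 - s^2 + (a - 1) + (b - 1))
      = (a * b - s^2) / (1 - s^2 + (a - 1) + (b - 1)) - 1 := by
    have hrw : (a - 1) * (b - 1) = (a * b - s^2) - (1 - s^2 + (a - 1) + (b - 1)) := by ring
    rw [hrw, sub_div, div_self hDne]
  have h2 : (a * b - s^2) / (1 - s^2 + (a - 1) + (b - 1)) < s :=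
    (div_lt_iff_of_neg hD).mpr key1
  have h3 : -s < (a * b - s^2) / (1 - s^2 + (a - 1) + (b - 1)) :=
    (lt_div_iff_of_neg hD).mpr key2
  exact ⟨hD, by rw [h1]; constructor <;> linarith⟩

end Reals

lemma one_le_rank {M : RankMatroid α} {e : α} (he : e ∈ M.E) (hre : M.r {e} = 1) :
    1 ≤ M.r M.E := hre ▸ r_mono M (by simpa using he) subset_rfl

lemma main_aux (q : ℚ) (hq0 : 0 < q) (hq1 : q < 1) :
    ∀ (n : ℕ) (M : RankMatroid α) (w : α → ℚ), M.E.card ≤ n →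
    (∀ e ∈ M.E, M.r {e} = 0 → -1 < w e) →
    (∀ e ∈ M.E, M.r (M.E.erase e) < M.r M.E → w e < -q) →
    (∀ e ∈ M.E, M.r {e} = 1 → M.r (M.E.erase e) = M.r M.E →
      -1 - Real.sqrt (1 - q) < (w e : ℝ) ∧ (w e : ℝ) < -1 + Real.sqrt (1 - q)) →
    0 < (-1 : ℚ) ^ M.r M.E * Zt M q w := by
  have hq : q ≠ 0 := ne_of_gt hq0
  -- square root facts
  set s : ℝ := Real.sqrt (1 - q) with hsdef
  have h1q : (0:ℝ) < 1 - (q:ℝ) := by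
    have : (q:ℝ) < 1 := by exact_mod_cast hq1
    linarith
  have hs0 : 0 < s := Real.sqrt_pos.mpr (by push_cast; linarith)
  have hssq : s^2 = 1 - (q:ℝ) := by
    rw [hsdef]; exact Real.sq_sqrt h1q.le
  have hs1 : s < 1 := by nlinarith [hq0, (show (0:ℝ) < (q:ℝ) by exact_mod_cast hq0)]
  have hqr : (q:ℝ) = 1 - s^2 := by linarith
  intro n
  induction n with
  | zero =>
    intro M w hc _ _ _
    have hE : M.E = ∅ := Finset.card_eq_zero.mp (Nat.le_zero.mp hc)
    have h0 : M.r M.E = 0 := by rw [hE]; exact r_empty M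
    have hZ : Zt M q w = 1 := by
      unfold Zt
      rw [hE, Finset.powerset_empty, Finset.sum_singleton, r_empty M]
      norm_num
    rw [hZ, h0]
    norm_num
  | succ n ih =>
    intro M w hc hloop hcoloop hnormal
    rcases M.E.eq_empty_or_nonempty with hE | ⟨x0, hx0⟩
    · have h0 : M.r M.E = 0 := by rw [hE]; exact r_empty M
      have hZ : Zt M q w = 1 := by
        unfold Zt
        rw [hE, Finset.powerset_empty, Finset.sum_singleton, r_empty M]
        norm_num
      rw [hZ, h0]
      norm_num
    have hcard1 : 1 ≤ M.E.card := Finset.card_pos.mpr ⟨x0, hx0⟩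
    by_cases hL : ∃ e ∈ M.E, M.r {e} = 0
    -- ================= LOOP CASE =================
    · obtain ⟨e, heE, hl⟩ := hL
      have hid := Zt_loop M q w heE hl
      have hrE : M.r (M.E.erase e) = M.r M.E := by
        have h5 := loop_insert M heE hl (A := M.E.erase e) (Finset.erase_subset _ _)
        rw [Finset.insert_erase heE] at h5
        exact h5.symm
      have hkey : ∀ g ∈ M.E.erase e, M.r ((M.E.erase e).erase g) = M.r (M.E.erase g) := by
        intro g hg
        obtain ⟨hgne, hgE⟩ := Finset.mem_erase.mp hg
        have hmem : e ∈ M.E.erase g := Finset.mem_erase.mpr ⟨fun h => hgne h.symm, heE⟩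
        have h5 := loop_insert M heE hl (A := (M.E.erase g).erase e)
          ((Finset.erase_subset _ _).trans (Finset.erase_subset _ _))
        rw [Finset.insert_erase hmem] at h5
        rw [Finset.erase_right_comm]
        exact h5.symm
      have hcd : (M.E.erase e).card ≤ n := by
        rw [Finset.card_erase_of_mem heE]; omega
      have hpos := ih (del M e) w hcd
        (fun g hg h => hloop g (Finset.mem_of_mem_erase hg) h)
        (fun g hg h => by
          have h' : M.r ((M.E.erase e).erase g) < M.r (M.E.erase e) := h
          rw [hkey g hg, hrE] at h'
          exact hcoloop g (Finset.mem_of_mem_erase hg) h')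
        (fun g hg h1 h2 => by
          have h2' : M.r ((M.E.erase e).erase g) = M.r (M.E.erase e) := h2
          rw [hkey g hg, hrE] at h2'
          exact hnormal g (Finset.mem_of_mem_erase hg) h1 h2')
      have hpos' : 0 < (-1:ℚ) ^ (M.r M.E) * Zt (del M e) q w := by
        rw [← hrE]; exact hpos
      have hfac : 0 < 1 + w e := by have := hloop e heE hl; linarith
      have h2 : (-1:ℚ) ^ (M.r M.E) * ((1 + w e) * Zt (del M e) q w)
          = (1 + w e) * ((-1:ℚ) ^ (M.r M.E) * Zt (del M e) q w) := by ring
      rw [hid, h2]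
      exact mul_pos hfac hpos'
    push_neg at hL
    have hone : ∀ e ∈ M.E, M.r {e} = 1 := by
      intro e heE
      have h1 := r_singleton_le M heE
      have h2 := hL e heE
      omega
    by_cases hC : ∃ e ∈ M.E, M.r (M.E.erase e) < M.r M.E
    -- ================= COLOOP CASE =================
    · obtain ⟨e, heE, hlt⟩ := hC
      have hid := Zt_coloop M q hq w heE hlt
      have hrE : M.r M.E = M.r (M.E.erase e) + 1 := by
        have h5 := insert_rank_of_coloop M heE hlt (A := M.E.erase e) subset_rfl
        rw [Finset.insert_erase heE] at h5
        exact h5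
      have hkey : ∀ g ∈ M.E.erase e,
          M.r (M.E.erase g) = M.r ((M.E.erase e).erase g) + 1 := by
        intro g hg
        obtain ⟨hgne, hgE⟩ := Finset.mem_erase.mp hg
        have hmem : e ∈ M.E.erase g := Finset.mem_erase.mpr ⟨fun h => hgne h.symm, heE⟩
        have hsub : (M.E.erase g).erase e ⊆ M.E.erase e := by
          rw [Finset.erase_right_comm]
          exact Finset.erase_subset _ _
        have h5 := insert_rank_of_coloop M heE hlt (A := (M.E.erase g).erase e) hsub
        rw [Finset.insert_erase hmem] at h5
        rw [Finset.erase_right_comm]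
        exact h5
      have hcd : (M.E.erase e).card ≤ n := by
        rw [Finset.card_erase_of_mem heE]; omega
      have hpos := ih (del M e) w hcd
        (fun g hg h => hloop g (Finset.mem_of_mem_erase hg) h)
        (fun g hg h => by
          have h' : M.r ((M.E.erase e).erase g) < M.r (M.E.erase e) := h
          have hk := hkey g hg
          exact hcoloop g (Finset.mem_of_mem_erase hg) (by omega))
        (fun g hg h1 h2 => by
          have h2' : M.r ((M.E.erase e).erase g) = M.r (M.E.erase e) := h2
          have hk := hkey g hg
          exact hnormal g (Finset.mem_of_mem_erase hg) h1 (by omega))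
      have hpos' : 0 < (-1:ℚ) ^ (M.r (M.E.erase e)) * Zt (del M e) q w := hpos
      have hfac : q + w e < 0 := by have := hcoloop e heE hlt; linarith
      have heq : q * ((-1:ℚ) ^ (M.r M.E) * Zt M q w)
          = (-(q + w e)) * ((-1:ℚ) ^ (M.r (M.E.erase e)) * Zt (del M e) q w) := by
        rw [hrE]
        linear_combination (-(-1:ℚ) ^ (M.r (M.E.erase e))) * hid
      have h3 : 0 < q * ((-1:ℚ) ^ (M.r M.E) * Zt M q w) := by
        rw [heq]
        exact mul_pos (by linarith) hpos'
      exact pos_of_mul_pos' hq0 h3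
    push_neg at hC
    have hfull : ∀ e ∈ M.E, M.r (M.E.erase e) = M.r M.E := fun e heE =>
      le_antisymm (r_mono M (Finset.erase_subset _ _) subset_rfl) (hC e heE)
    -- normal bounds available for every element now
    have hnb : ∀ e ∈ M.E, -1 - s < (w e : ℝ) ∧ (w e : ℝ) < -1 + s := fun e heE =>
      hnormal e heE (hone e heE) (hfull e heE)
    by_cases hP : ∃ e ∈ M.E, ∃ f ∈ M.E, e ≠ f ∧ M.r {e, f} ≤ 1
    -- ================= PARALLEL CASE =================
    · obtain ⟨e, heE, f, hfE, hef, hpair⟩ := hP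
      have hre := hone e heE
      have hrf := hone f hfE
      set w' := Function.update w e (w e + w f + w e * w f) with hw'
      have hid := Zt_parallel M q w heE hfE hef hre hrf hpair
      -- real bounds for the merged weight
      obtain ⟨hae1, hae2⟩ := hnb e heE
      obtain ⟨haf1, haf2⟩ := hnb f hfE
      have hbd := par_bounds hs0 hs1 hqr
        (show -s < 1 + (w e : ℝ) by linarith) (show 1 + (w e : ℝ) < s by linarith)
        (show -s < 1 + (w f : ℝ) by linarith) (show 1 + (w f : ℝ) < s by linarith)
      have hval : ((w e + w f + w e * w f : ℚ) : ℝ)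
          = (1 + (w e : ℝ)) * (1 + (w f : ℝ)) - 1 := by push_cast; ring
      have hcolbd : (w e + w f + w e * w f : ℚ) < -q := by
        have : ((w e + w f + w e * w f : ℚ) : ℝ) < ((-q : ℚ) : ℝ) := by
          rw [hval]; push_cast; exact hbd.1
        exact_mod_cast this
      have hnorbd : -1 - s < ((w e + w f + w e * w f : ℚ) : ℝ)
          ∧ ((w e + w f + w e * w f : ℚ) : ℝ) < -1 + s := by
        rw [hval]; exact ⟨hbd.2.1, hbd.2.2⟩
      have hcd : (M.E.erase f).card ≤ n := by
        rw [Finset.card_erase_of_mem hfE]; omega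
      have hpos := ih (del M f) w' hcd
        (fun g hg h => by
          have h' : M.r {g} = 0 := h
          have := hone g (Finset.mem_of_mem_erase hg)
          omega)
        (fun g hg h => by
          have hgE := Finset.mem_of_mem_erase hg
          by_cases hge : g = e
          · subst hge
            rw [hw', Function.update_self]
            exact hcolbd
          · exfalso
            have hgf : g ≠ f := (Finset.mem_erase.mp hg).1
            have h' : M.r ((M.E.erase f).erase g) < M.r (M.E.erase f) := h
            have hmem : f ∈ M.E.erase g := Finset.mem_erase.mpr ⟨fun hh => hgf hh.symm, hfE⟩
            have heA : e ∈ (M.E.erase g).erase f :=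
              Finset.mem_erase.mpr ⟨hef, Finset.mem_erase.mpr ⟨Ne.symm hge, heE⟩⟩
            have h6 := parallel_insert M hfE hre hpair
              (A := (M.E.erase g).erase f)
              (((Finset.erase_subset _ _).trans (Finset.erase_subset _ _))) heA
            rw [Finset.insert_erase hmem] at h6
            rw [Finset.erase_right_comm, ← h6, hfull g hgE, ← hfull f hfE] at h'
            exact lt_irrefl _ h'
          )
        (fun g hg h1 h2 => by
          have hgE := Finset.mem_of_mem_erase hg
          by_cases hge : g = e
          · subst hge
            rw [hw', Function.update_self]
            exact hnorbd
          · rw [hw', Function.update_of_ne hge]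
            exact hnb g hgE)
      have hpos' : 0 < (-1:ℚ) ^ (M.r (M.E.erase f)) * Zt (del M f) q w' := hpos
      rw [hfull f hfE] at hpos'
      rw [hid]
      exact hpos'
    push_neg at hP
    have hpair2 : ∀ e ∈ M.E, ∀ f ∈ M.E, e ≠ f → M.r {e, f} = 2 := by
      intro e heE f hfE hef
      have h1 := hP e heE f hfE hef
      have h2 : M.r {e, f} ≤ 2 := by
        have := M.rank_le_card {e, f} (Finset.insert_subset heE (by simpa using hfE))
        have hc2 : ({e, f} : Finset α).card ≤ 2 := Finset.card_insert_le _ _ |>.trans (by simp)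
        omega
      omega
    by_cases hS : ∃ e ∈ M.E, ∃ f ∈ M.E, e ≠ f ∧ M.r ((M.E.erase f).erase e) < M.r M.E
    -- ================= SERIES CASE =================
    · obtain ⟨e, heE, f, hfE, hef, hser⟩ := hS
      have hre := hone e heE
      have hrf := hone f hfE
      obtain ⟨hae1, hae2⟩ := hnb e heE
      obtain ⟨haf1, haf2⟩ := hnb f hfE
      have hbd := ser_bounds hs0 hs1 hqr
        (show -s < 1 + (w e : ℝ) by linarith) (show 1 + (w e : ℝ) < s by linarith)
        (show -s < 1 + (w f : ℝ) by linarith) (show 1 + (w f : ℝ) < s by linarith)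
      have hDr : ((q + w e + w f : ℚ) : ℝ) = (q:ℝ) + (1 + (w e:ℝ) - 1) + (1 + (w f:ℝ) - 1) := by
        push_cast; ring
      have hDlt : q + w e + w f < 0 := by
        have : ((q + w e + w f : ℚ) : ℝ) < 0 := by
          have := hbd.1
          rw [hDr, hqr]
          linarith [hbd.1]
        exact_mod_cast this
      have hDne : q + w e + w f ≠ 0 := ne_of_lt hDlt
      -- the two rank identities on subsets
      have hranks : ∀ A ∈ ((M.E.erase f).erase e).powerset,
          M.r (insert e A) = M.r A + 1 ∧ M.r (insert f A) = M.r A + 1 := by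
        intro A hA
        have hAe : A ⊆ (M.E.erase f).erase e := Finset.mem_powerset.mp hA
        constructor
        · have he' : e ∈ (del M f).E := Finset.mem_erase.mpr ⟨hef, heE⟩
          have hlt' : (del M f).r ((del M f).E.erase e) < (del M f).r (del M f).E := by
            show M.r ((M.E.erase f).erase e) < M.r (M.E.erase f)
            rw [hfull f hfE]
            exact hser
          exact insert_rank_of_coloop (del M f) he' hlt' hAe
        · have hf' : f ∈ (del M e).E := Finset.mem_erase.mpr ⟨fun h => hef h.symm, hfE⟩
          have hlt' : (del M e).r ((del M e).E.erase f) < (del M e).r (del M e).E := by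
            show M.r ((M.E.erase e).erase f) < M.r (M.E.erase e)
            rw [hfull e heE, Finset.erase_right_comm]
            exact hser
          have hAe' : A ⊆ (M.E.erase e).erase f := by
            rw [Finset.erase_right_comm]; exact hAe
          exact insert_rank_of_coloop (del M e) hf' hlt' hAe'
      set γ := w e * w f / (q + w e + w f) with hγ
      set w' := Function.update w e γ with hw'
      have hid := Zt_series M q hq w heE hfE hef hre hrf hDne hranks
      -- bounds on γ
      have hγr : (γ : ℝ) = ((1 + (w e:ℝ)) - 1) * ((1 + (w f:ℝ)) - 1)
          / ((q:ℝ) + ((1 + (w e:ℝ)) - 1) + ((1 + (w f:ℝ)) - 1)) := by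
        rw [hγ]; push_cast; ring_nf
      have hγbd : -1 - s < (γ : ℝ) ∧ (γ : ℝ) < -1 + s := by
        rw [hγr]
        exact hbd.2
      -- rank bookkeeping
      have hrEfull : M.r (insert f (M.E.erase f)) = M.r M.E := by
        rw [Finset.insert_erase hfE]
      have hr1 : 1 ≤ M.r M.E := one_le_rank hfE hrf
      set N := con M f hfE hrf with hN
      have hNE : N.r N.E = M.r M.E - 1 := by
        show M.r (insert f (M.E.erase f)) - 1 = M.r M.E - 1
        rw [hrEfull]
      have hcd : (M.E.erase f).card ≤ n := by
        rw [Finset.card_erase_of_mem hfE]; omega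
      have hpos := ih N w' hcd
        (fun g hg h => by
          have hgE := Finset.mem_of_mem_erase hg
          have hgf : g ≠ f := (Finset.mem_erase.mp hg).1
          have h' : M.r (insert f {g}) - 1 = 0 := h
          have hp := hpair2 f hfE g hgE (fun hh => hgf hh.symm)
          rw [show (insert f {g} : Finset α) = {f, g} from rfl, hp] at h'
          omega)
        (fun g hg h => by
          exfalso
          have hgE := Finset.mem_of_mem_erase hg
          have hgf : g ≠ f := (Finset.mem_erase.mp hg).1
          have h' : M.r (insert f ((M.E.erase f).erase g)) - 1
              < M.r (insert f (M.E.erase f)) - 1 := h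
          have hmem : f ∈ M.E.erase g := Finset.mem_erase.mpr ⟨fun hh => hgf hh.symm, hfE⟩
          have hset : insert f ((M.E.erase f).erase g) = M.E.erase g := by
            rw [Finset.erase_right_comm]
            exact Finset.insert_erase hmem
          rw [hset, hrEfull, hfull g hgE] at h'
          exact lt_irrefl _ h')
        (fun g hg h1 h2 => by
          have hgE := Finset.mem_of_mem_erase hg
          by_cases hge : g = e
          · subst hge
            rw [hw', Function.update_self]
            exact hγbd
          · rw [hw', Function.update_of_ne hge]
            exact hnb g hgE)
      have hpos' : 0 < (-1:ℚ) ^ (N.r N.E) * Zt N q w' := hpos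
      have hrE : M.r M.E = N.r N.E + 1 := by omega
      have heq : q * ((-1:ℚ) ^ (M.r M.E) * Zt M q w)
          = (-(q + w e + w f)) * ((-1:ℚ) ^ (N.r N.E) * Zt N q w') := by
        rw [hrE]
        linear_combination (-(-1:ℚ) ^ (N.r N.E)) * hid
      have h3 : 0 < q * ((-1:ℚ) ^ (M.r M.E) * Zt M q w) := by
        rw [heq]
        exact mul_pos (by linarith) hpos'
      exact pos_of_mul_pos' hq0 h3
    push_neg at hS
    -- ================= GENERIC CASE =================
    · set e := x0 with he_def
      have heE : e ∈ M.E := hx0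
      have hre := hone e heE
      have hid := Zt_del_con M q hq w heE hre
      have hcd : (M.E.erase e).card ≤ n := by
        rw [Finset.card_erase_of_mem heE]; omega
      -- deletion part
      have hpos1 := ih (del M e) w hcd
        (fun g hg h => by
          have h' : M.r {g} = 0 := h
          have := hone g (Finset.mem_of_mem_erase hg)
          omega)
        (fun g hg h => by
          exfalso
          have hgE := Finset.mem_of_mem_erase hg
          have hgne : g ≠ e := (Finset.mem_erase.mp hg).1
          have h' : M.r ((M.E.erase e).erase g) < M.r (M.E.erase e) := h
          have hns := hS g hgE e heE hgne
          rw [hfull e heE] at h'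
          omega)
        (fun g hg h1 h2 => hnb g (Finset.mem_of_mem_erase hg))
      have hposd : 0 < (-1:ℚ) ^ (M.r M.E) * Zt (del M e) q w := by
        have h' : 0 < (-1:ℚ) ^ (M.r (M.E.erase e)) * Zt (del M e) q w := hpos1
        rwa [hfull e heE] at h'
      -- contraction part
      set N := con M e heE hre with hN
      have hrEfull : M.r (insert e (M.E.erase e)) = M.r M.E := by
        rw [Finset.insert_erase heE]
      have hr1 : 1 ≤ M.r M.E := one_le_rank heE hre
      have hNE : N.r N.E = M.r M.E - 1 := by
        show M.r (insert e (M.E.erase e)) - 1 = M.r M.E - 1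
        rw [hrEfull]
      have hpos2 := ih N w hcd
        (fun g hg h => by
          have hgE := Finset.mem_of_mem_erase hg
          have hgne : g ≠ e := (Finset.mem_erase.mp hg).1
          have h' : M.r (insert e {g}) - 1 = 0 := h
          have hp := hpair2 e heE g hgE (fun hh => hgne hh.symm)
          rw [show (insert e {g} : Finset α) = {e, g} from rfl, hp] at h'
          omega)
        (fun g hg h => by
          exfalso
          have hgE := Finset.mem_of_mem_erase hg
          have hgne : g ≠ e := (Finset.mem_erase.mp hg).1
          have h' : M.r (insert e ((M.E.erase e).erase g)) - 1
              < M.r (insert e (M.E.erase e)) - 1 := h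
          have hmem : e ∈ M.E.erase g := Finset.mem_erase.mpr ⟨fun hh => hgne hh.symm, heE⟩
          have hset : insert e ((M.E.erase e).erase g) = M.E.erase g := by
            rw [Finset.erase_right_comm]
            exact Finset.insert_erase hmem
          rw [hset, hrEfull, hfull g hgE] at h'
          exact lt_irrefl _ h')
        (fun g hg h1 h2 => hnb g (Finset.mem_of_mem_erase hg))
      have hposc : 0 < (-1:ℚ) ^ (N.r N.E) * Zt N q w := hpos2
      have hrE : M.r M.E = N.r N.E + 1 := by omega
      have hwe_neg : w e < 0 := by
        have h1 := (hnb e heE).2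
        have : (w e : ℝ) < 0 := by linarith
        exact_mod_cast this
      have heq : q * ((-1:ℚ) ^ (M.r M.E) * Zt M q w)
          = q * ((-1:ℚ) ^ (M.r M.E) * Zt (del M e) q w)
            + (- w e) * ((-1:ℚ) ^ (N.r N.E) * Zt N q w) := by
        rw [hrE]
        linear_combination ((-1:ℚ) ^ (N.r N.E + 1)) * hid
      have h3 : 0 < q * ((-1:ℚ) ^ (M.r M.E) * Zt M q w) := by
        rw [heq]
        have t1 : 0 < q * ((-1:ℚ) ^ (M.r M.E) * Zt (del M e) q w) := mul_pos hq0 hposd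
        have t2 : 0 < (- w e) * ((-1:ℚ) ^ (N.r N.E) * Zt N q w) :=
          mul_pos (by linarith) hposc
        linarith
      exact pos_of_mul_pos' hq0 h3

end TutteAux

/-- for `0 < q < 1` and a weight function `𝛄` with `γ_e > -1` on loops,
`γ_e < -q` on coloops, and `-1-√(1-q) < γ_e < -1+√(1-q)` on all other elements,
one has `(-1)^{r(E)}·Z̃(M;q,𝛄) > 0`. -/
theorem matroid_tutte_sign_small_q {α : Type} [DecidableEq α] (M : RankMatroid α)
    (q : ℚ) (hq0 : 0 < q) (hq1 : q < 1) (w : α → ℚ)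
    (hloop : ∀ e ∈ M.E, M.IsLoop e → -1 < w e)
    (hcoloop : ∀ e ∈ M.E, M.IsColoop e → w e < -q)
    (hnormal : ∀ e ∈ M.E, ¬ M.IsLoop e → ¬ M.IsColoop e →
      -1 - Real.sqrt (1 - q) < (w e : ℝ) ∧ (w e : ℝ) < -1 + Real.sqrt (1 - q)) :
    0 < (-1 : ℚ) ^ M.r M.E * Zt M q w := by
  apply TutteAux.main_aux q hq0 hq1 M.E.card M w le_rfl
  · intro e heE h
    exact hloop e heE ⟨heE, h⟩
  · intro e heE h
    exact hcoloop e heE ((TutteAux.coloop_iff M heE).mpr h)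
  · intro e heE h1 h2
    refine hnormal e heE (fun hl => by rw [hl.2] at h1; omega) (fun hcl => ?_)
    have := (TutteAux.coloop_iff M heE).mp hcl
    omega
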